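/- Let A ∈ F_4[x] be bi-unitary perfect and splitting (a product of linear factors) with exactly two distinct monic irreducible factors (ω(A) = 2). Then A ∈ Σ, i.e., A = (x^2+x)^r or A = (x^2+x+1)^r with r = 2 or r = 2^n − 1 for some n ≥ 1. Conversely, every element of Σ is bi-unitary perfect over F_4. -/

import Mathlib

open Polynomial

variable {F : Type*} [Field F]

/-- `D` is a (monic) unitary divisor of `S`: `D ∣ S` and `gcd(D, S/D) = 1`. -/
def IsUnitaryDivisor (D S : Polynomial F) : Prop :=
  D.Monic ∧ D ∣ S ∧ IsCoprime D (S / D)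

/-- `D` is a (monic) bi-unitary divisor of `S`: `gcd_u(D, S/D) = 1`, i.e. the only common
monic unitary divisor of `D` and `S/D` is `1`. -/
def IsBiunitaryDivisor (D S : Polynomial F) : Prop :=
  D.Monic ∧ D ∣ S ∧
    ∀ G : Polynomial F, IsUnitaryDivisor G D → IsUnitaryDivisor G (S / D) → G = 1

/-- `σ(S)`: the sum of all monic divisors of `S`. -/
noncomputable def sigma' (S : Polynomial F) : Polynomial F :=
  ∑ᶠ D ∈ {D : Polynomial F | D.Monic ∧ D ∣ S}, D

/-- `σ**(S)`: the sum of all monic bi-unitary divisors of `S`. -/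
noncomputable def sigmaStarStar (S : Polynomial F) : Polynomial F :=
  ∑ᶠ D ∈ {D : Polynomial F | IsBiunitaryDivisor D S}, D

/-- `S` is bi-unitary perfect: `σ**(S) = S`. -/
def IsBUP (S : Polynomial F) : Prop := sigmaStarStar S = S

/-- `ω(S)`: the number of distinct monic irreducible factors of `S`. -/
noncomputable def omegaCount (S : Polynomial F) : ℕ :=
  {P : Polynomial F | P.Monic ∧ Irreducible P ∧ P ∣ S}.ncard

/-- The field with four elements. -/
abbrev F4 := GaloisField 2 2

/-- The exponent set `𝒯 = {2} ∪ {2^n - 1 : n ≥ 1}`. -/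
def TSet : Set ℕ := {r | 0 < r ∧ (r = 2 ∨ ∃ n : ℕ, 1 ≤ n ∧ r = 2 ^ n - 1)}

/-- The set `Σ = {(x²+x)^r, (x²+x+1)^r : r ∈ 𝒯}`. -/
def SigmaSet : Set (Polynomial F4) :=
  {A | ∃ r ∈ TSet, A = (X ^ 2 + X) ^ r ∨ A = (X ^ 2 + X + 1) ^ r}

set_option linter.unusedSectionVars false
set_option linter.unusedVariables false

/-- index set -/
def Iset (m : ℕ) : Finset ℕ := (Finset.range (m+1)).filter (fun i => 2*i ≠ m)

section Machinery

variable {P Q : F[X]} (hP : P.Monic) (hQ : Q.Monic) (hPi : Irreducible P)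
  (hQi : Irreducible Q) (hne : P ≠ Q)

include hP hQ hPi hQi hne

lemma coprime_PQ : IsCoprime P Q := by
  apply isCoprime_of_irreducible_dvd
  · rintro ⟨h0, -⟩; exact hPi.ne_zero h0
  · intro z hz hzP hzQ
    exact hne (eq_of_monic_of_associated hP hQ
      (((hz.associated_of_dvd hPi hzP).symm.trans (hz.associated_of_dvd hQi hzQ))))

lemma pq_ne_zero (i j : ℕ) : P ^ i * Q ^ j ≠ 0 :=
  mul_ne_zero (pow_ne_zero _ hP.ne_zero) (pow_ne_zero _ hQ.ne_zero)

lemma dvd_classify {u : F} (hu : u ≠ 0) {a b : ℕ} {D : F[X]} (hD : D.Monic)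
    (hdvd : D ∣ C u * (P ^ a * Q ^ b)) : ∃ i ≤ a, ∃ j ≤ b, D = P ^ i * Q ^ j := by
  have hdvd' : D ∣ P ^ a * Q ^ b := ((isUnit_C.2 hu.isUnit).dvd_mul_left).mp hdvd
  obtain ⟨D1, D2, h1, h2, rfl⟩ := exists_dvd_and_dvd_of_dvd_mul hdvd'
  obtain ⟨i, hi, hA1⟩ := (dvd_prime_pow hPi.prime a).mp h1
  obtain ⟨j, hj, hA2⟩ := (dvd_prime_pow hQi.prime b).mp h2
  refine ⟨i, hi, j, hj, ?_⟩
  exact eq_of_monic_of_associated hD ((hP.pow _).mul (hQ.pow _)) (hA1.mul_mul hA2)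

lemma pq_inj {i j i' j' : ℕ} (h : P ^ i * Q ^ j = P ^ i' * Q ^ j') : i = i' ∧ j = j' := by
  have hcop := coprime_PQ hP hQ hPi hQi hne
  have key : ∀ {m n m' n' : ℕ}, P ^ m * Q ^ n = P ^ m' * Q ^ n' → m ≤ m' := by
    intro m n m' n' hmn
    have h1 : P ^ m ∣ P ^ m' * Q ^ n' := ⟨Q ^ n, hmn ▸ by ring⟩
    have h2 : P ^ m ∣ P ^ m' := (hcop.symm.pow (m := n') (n := m)).symm.dvd_of_dvd_mul_right h1
    exact (pow_dvd_pow_iff hP.ne_zero hPi.not_isUnit).mp h2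
  have hii : i = i' := le_antisymm (key h) (key h.symm)
  subst hii
  have hQj : Q ^ j = Q ^ j' := by
    have := mul_left_cancel₀ (pow_ne_zero i hP.ne_zero) h
    exact this
  refine ⟨rfl, ?_⟩
  have := congrArg natDegree hQj
  rw [natDegree_pow, natDegree_pow] at this
  exact Nat.eq_of_mul_eq_mul_right hQi.natDegree_pos this


lemma quot_eq {u : F} (hu : u ≠ 0) {a b i j : ℕ} (hia : i ≤ a) (hjb : j ≤ b) :
    C u * (P ^ a * Q ^ b) / (P ^ i * Q ^ j) = C u * (P ^ (a - i) * Q ^ (b - j)) := by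
  have hfac : C u * (P ^ a * Q ^ b) = (P ^ i * Q ^ j) * (C u * (P ^ (a - i) * Q ^ (b - j))) := by
    rw [← pow_sub_mul_pow P hia, ← pow_sub_mul_pow Q hjb]; ring
  rw [hfac, mul_div_cancel_left₀ _ (pq_ne_zero hP hQ hPi hQi hne i j)]

lemma unitary_iff {u : F} (hu : u ≠ 0) {a b : ℕ} {G : F[X]} :
    IsUnitaryDivisor G (C u * (P ^ a * Q ^ b)) ↔
      ∃ i j, (i = 0 ∨ i = a) ∧ (j = 0 ∨ j = b) ∧ G = P ^ i * Q ^ j := by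
  have hcop := coprime_PQ hP hQ hPi hQi hne
  constructor
  · rintro ⟨hGm, hGdvd, hGcop⟩
    obtain ⟨i, hia, j, hjb, rfl⟩ := dvd_classify hP hQ hPi hQi hne hu hGm hGdvd
    rw [quot_eq hP hQ hPi hQi hne hu hia hjb] at hGcop
    refine ⟨i, j, ?_, ?_, rfl⟩
    · by_contra hcon
      push_neg at hcon
      obtain ⟨hi0, hia'⟩ := hcon
      have hdvd1 : P ∣ P ^ i * Q ^ j := dvd_mul_of_dvd_left (dvd_pow_self P hi0) _
      have hdvd2 : P ∣ C u * (P ^ (a - i) * Q ^ (b - j)) :=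
        Dvd.dvd.mul_left (dvd_mul_of_dvd_left
          (dvd_pow_self P (fun hz => hia' (by omega))) _) _
      exact hPi.not_isUnit (hGcop.isUnit_of_dvd' hdvd1 hdvd2)
    · by_contra hcon
      push_neg at hcon
      obtain ⟨hj0, hjb'⟩ := hcon
      have hdvd1 : Q ∣ P ^ i * Q ^ j := dvd_mul_of_dvd_right (dvd_pow_self Q hj0) _
      have hdvd2 : Q ∣ C u * (P ^ (a - i) * Q ^ (b - j)) :=
        Dvd.dvd.mul_left (dvd_mul_of_dvd_right
          (dvd_pow_self Q (fun hz => hjb' (by omega))) _) _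
      exact hQi.not_isUnit (hGcop.isUnit_of_dvd' hdvd1 hdvd2)
  · rintro ⟨i, j, hi, hj, rfl⟩
    have hia : i ≤ a := by rcases hi with h | h <;> omega
    have hjb : j ≤ b := by rcases hj with h | h <;> omega
    refine ⟨(hP.pow _).mul (hQ.pow _), ?_, ?_⟩
    · exact Dvd.dvd.mul_left (mul_dvd_mul (pow_dvd_pow P hia) (pow_dvd_pow Q hjb)) _
    · rw [quot_eq hP hQ hPi hQi hne hu hia hjb]
      rw [isCoprime_mul_unit_left_right (isUnit_C.2 hu.isUnit) _ _]
      have c1 : IsCoprime (P ^ i) (P ^ (a - i)) := by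
        rcases hi with h | h
        · subst h; simpa using isCoprime_one_left
        · subst h; rw [Nat.sub_self, pow_zero]; exact isCoprime_one_right
      have c2 : IsCoprime (P ^ i) (Q ^ (b - j)) := hcop.pow
      have c3 : IsCoprime (Q ^ j) (P ^ (a - i)) := hcop.symm.pow
      have c4 : IsCoprime (Q ^ j) (Q ^ (b - j)) := by
        rcases hj with h | h
        · subst h; simpa using isCoprime_one_left
        · subst h; rw [Nat.sub_self, pow_zero]; exact isCoprime_one_right
      exact (c1.mul_right c2).mul_left (c3.mul_right c4)


lemma unitary_iff' {a b : ℕ} {G : F[X]} :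
    IsUnitaryDivisor G (P ^ a * Q ^ b) ↔
      ∃ i j, (i = 0 ∨ i = a) ∧ (j = 0 ∨ j = b) ∧ G = P ^ i * Q ^ j := by
  have := unitary_iff hP hQ hPi hQi hne (u := 1) one_ne_zero (a := a) (b := b) (G := G)
  rwa [map_one, one_mul] at this

lemma biunitary_iff {u : F} (hu : u ≠ 0) {h k : ℕ} (hh : 1 ≤ h) (hk : 1 ≤ k) {D : F[X]} :
    IsBiunitaryDivisor D (C u * (P ^ h * Q ^ k)) ↔
      ∃ i j, i ≤ h ∧ j ≤ k ∧ 2 * i ≠ h ∧ 2 * j ≠ k ∧ D = P ^ i * Q ^ j := by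
  constructor
  · rintro ⟨hDm, hDdvd, hG⟩
    obtain ⟨i, hia, j, hjb, rfl⟩ := dvd_classify hP hQ hPi hQi hne hu hDm hDdvd
    rw [quot_eq hP hQ hPi hQi hne hu hia hjb] at hG
    refine ⟨i, j, hia, hjb, ?_, ?_, rfl⟩
    · intro h2i
      have hi1 : 1 ≤ i := by omega
      have hG1 : IsUnitaryDivisor (P ^ i * Q ^ 0) (P ^ i * Q ^ j) :=
        (unitary_iff' hP hQ hPi hQi hne).mpr ⟨i, 0, Or.inr rfl, Or.inl rfl, rfl⟩
      have hG2 : IsUnitaryDivisor (P ^ i * Q ^ 0) (C u * (P ^ (h - i) * Q ^ (k - j))) :=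
        (unitary_iff hP hQ hPi hQi hne hu).mpr ⟨i, 0, Or.inr (by omega), Or.inl rfl, rfl⟩
      have := hG _ hG1 hG2
      rw [pow_zero, mul_one] at this
      exact hPi.not_isUnit ((isUnit_pow_iff (n := i) (by omega)).mp (by rw [this]; exact isUnit_one))
    · intro h2j
      have hj1 : 1 ≤ j := by omega
      have hG1 : IsUnitaryDivisor (P ^ 0 * Q ^ j) (P ^ i * Q ^ j) :=
        (unitary_iff' hP hQ hPi hQi hne).mpr ⟨0, j, Or.inl rfl, Or.inr rfl, rfl⟩
      have hG2 : IsUnitaryDivisor (P ^ 0 * Q ^ j) (C u * (P ^ (h - i) * Q ^ (k - j))) :=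
        (unitary_iff hP hQ hPi hQi hne hu).mpr ⟨0, j, Or.inl rfl, Or.inr (by omega), rfl⟩
      have := hG _ hG1 hG2
      rw [pow_zero, one_mul] at this
      exact hQi.not_isUnit ((isUnit_pow_iff (n := j) (by omega)).mp (by rw [this]; exact isUnit_one))
  · rintro ⟨i, j, hia, hjb, h2i, h2j, rfl⟩
    refine ⟨(hP.pow _).mul (hQ.pow _),
      Dvd.dvd.mul_left (mul_dvd_mul (pow_dvd_pow P hia) (pow_dvd_pow Q hjb)) _, ?_⟩
    intro G hG1 hG2
    rw [quot_eq hP hQ hPi hQi hne hu hia hjb] at hG2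
    obtain ⟨i', j', hi', hj', rfl⟩ := (unitary_iff' hP hQ hPi hQi hne).mp hG1
    obtain ⟨i'', j'', hi'', hj'', heq⟩ := (unitary_iff hP hQ hPi hQi hne hu).mp hG2
    obtain ⟨hii, hjj⟩ := pq_inj hP hQ hPi hQi hne heq
    have hi0 : i' = 0 := by
      rcases hi' with h | h
      · exact h
      · rcases hi'' with h' | h' <;> omega
    have hj0 : j' = 0 := by
      rcases hj' with h | h
      · exact h
      · rcases hj'' with h' | h' <;> omega
    rw [hi0, hj0, pow_zero, pow_zero, mul_one]


lemma sigma_eq {u : F} (hu : u ≠ 0) {h k : ℕ} (hh : 1 ≤ h) (hk : 1 ≤ k) :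
    sigmaStarStar (C u * (P ^ h * Q ^ k)) = (∑ i ∈ Iset h, P ^ i) * (∑ j ∈ Iset k, Q ^ j) := by
  classical
  have hset : {D : F[X] | IsBiunitaryDivisor D (C u * (P ^ h * Q ^ k))} =
      ↑(((Iset h) ×ˢ (Iset k)).image fun p => P ^ p.1 * Q ^ p.2) := by
    ext D
    simp only [Set.mem_setOf_eq, biunitary_iff hP hQ hPi hQi hne hu hh hk, Finset.coe_image,
      Set.mem_image, Finset.mem_coe, Finset.mem_product, Iset, Finset.mem_filter, Finset.mem_range]
    constructor
    · rintro ⟨i, j, h1, h2, h3, h4, rfl⟩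
      exact ⟨(i, j), ⟨⟨by omega, h3⟩, by omega, h4⟩, rfl⟩
    · rintro ⟨⟨i, j⟩, ⟨⟨h1, h3⟩, h2, h4⟩, rfl⟩
      exact ⟨i, j, by omega, by omega, h3, h4, rfl⟩
  rw [sigmaStarStar, hset, finsum_mem_coe_finset, Finset.sum_image ?inj, Finset.sum_product,
    ← Finset.sum_mul_sum]
  case inj =>
    rintro ⟨i, j⟩ - ⟨i', j'⟩ - heq
    have := pq_inj hP hQ hPi hQi hne heq
    simp only [Prod.mk.injEq]
    exact ⟨this.1, this.2⟩

end Machinery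

lemma mem_Iset_self {m : ℕ} (hm : 1 ≤ m) : m ∈ Iset m := by
  simp only [Iset, Finset.mem_filter, Finset.mem_range]; omega

lemma zero_mem_Iset {m : ℕ} (hm : 1 ≤ m) : 0 ∈ Iset m := by
  simp only [Iset, Finset.mem_filter, Finset.mem_range]; omega

section Sums

variable {P : F[X]} (hP : P.Monic) (hdeg : P.degree = 1)

include hP hdeg

lemma degree_pow_lin (i : ℕ) : (P ^ i).degree = (i : WithBot ℕ) := by
  rw [degree_pow, hdeg, nsmul_eq_mul, mul_one]

lemma sumpow_monic {m : ℕ} (hm : 1 ≤ m) : (∑ i ∈ Iset m, P ^ i).Monic := by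
  rw [← Finset.add_sum_erase _ _ (mem_Iset_self hm)]
  apply (hP.pow m).add_of_left
  rw [degree_pow_lin hP hdeg]
  refine lt_of_le_of_lt (degree_sum_le _ _) ?_
  rw [Finset.sup_lt_iff (by exact_mod_cast WithBot.bot_lt_coe m)]
  intro i hi
  rw [degree_pow_lin hP hdeg]
  have : i < m := by
    have h1 := Finset.ne_of_mem_erase hi
    have h2 := Finset.mem_of_mem_erase hi
    simp only [Iset, Finset.mem_filter, Finset.mem_range] at h2
    omega
  exact_mod_cast this

lemma sumpow_degree {m : ℕ} (hm : 1 ≤ m) : (∑ i ∈ Iset m, P ^ i).natDegree = m := by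
  have h1 : (∑ i ∈ Iset m, P ^ i).degree = (m : WithBot ℕ) := by
    rw [← Finset.add_sum_erase _ _ (mem_Iset_self hm)]
    rw [degree_add_eq_left_of_degree_lt, degree_pow_lin hP hdeg]
    rw [degree_pow_lin hP hdeg]
    refine lt_of_le_of_lt (degree_sum_le _ _) ?_
    rw [Finset.sup_lt_iff (by exact_mod_cast WithBot.bot_lt_coe m)]
    intro i hi
    rw [degree_pow_lin hP hdeg]
    have h1 := Finset.ne_of_mem_erase hi
    have h2 := Finset.mem_of_mem_erase hi
    simp only [Iset, Finset.mem_filter, Finset.mem_range] at h2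
    exact_mod_cast (by omega : i < m)
  exact natDegree_eq_of_degree_eq_some h1

lemma sumpow_not_dvd {m : ℕ} (hm : 1 ≤ m) (hPi : Irreducible P) :
    ¬ P ∣ ∑ i ∈ Iset m, P ^ i := by
  intro hdvd
  rw [← Finset.add_sum_erase _ _ (zero_mem_Iset hm)] at hdvd
  have hrest : P ∣ ∑ i ∈ (Iset m).erase 0, P ^ i :=
    Finset.dvd_sum (fun i hi => dvd_pow_self P (Finset.ne_of_mem_erase hi))
  have h1 : P ∣ 1 := by
    have := dvd_sub hdvd hrest
    simpa using this
  exact hPi.not_isUnit (isUnit_of_dvd_one h1)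

end Sums

section Half

variable {P Q : F[X]} (hP : P.Monic) (hQ : Q.Monic) (hPi : Irreducible P)
  (hQi : Irreducible Q) (hne : P ≠ Q)

include hP hQ hPi hQi hne

lemma half {h k : ℕ} (hh : 1 ≤ h) (hk : 1 ≤ k) (hdP : P.degree = 1) (hdQ : Q.degree = 1)
    (heq : (∑ i ∈ Iset h, P ^ i) * (∑ j ∈ Iset k, Q ^ j) = P ^ h * Q ^ k) :
    h ≤ k ∧ (∑ i ∈ Iset h, P ^ i) = Q ^ h := by
  have hSm : (∑ i ∈ Iset h, P ^ i).Monic := sumpow_monic hP hdP hh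
  have hdvd : (∑ i ∈ Iset h, P ^ i) ∣ C (1:F) * (P ^ h * Q ^ k) := by
    rw [map_one, one_mul]; exact ⟨_, heq.symm⟩
  obtain ⟨i, hia, j, hjb, hSP⟩ := dvd_classify hP hQ hPi hQi hne one_ne_zero hSm hdvd
  have hi0 : i = 0 := by
    by_contra h0
    exact sumpow_not_dvd hP hdP hh hPi (hSP ▸ dvd_mul_of_dvd_left (dvd_pow_self P h0) _)
  rw [hi0, pow_zero, one_mul] at hSP
  have hdQn : Q.natDegree = 1 := natDegree_eq_of_degree_eq_some hdQ
  have hjh : j = h := by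
    have := congrArg natDegree hSP
    rw [sumpow_degree hP hdP hh, natDegree_pow, hdQn, mul_one] at this
    omega
  subst hjh
  exact ⟨hjb, hSP⟩

end Half

section CharTwoStuff

variable [CharP F 2]

lemma sq_inj {a b : F[X]} (h : a ^ 2 = b ^ 2) : a = b := by
  have h2 : (a - b) ^ 2 = 0 := by
    rw [CharTwo.sub_eq_add, CharTwo.add_sq, h, ← CharTwo.add_sq, CharTwo.add_self_eq_zero,
      zero_pow (two_ne_zero)]
  rw [← sub_eq_zero]
  exact pow_eq_zero_iff (two_ne_zero) |>.mp h2

lemma pow_two_of : ∀ m : ℕ, 1 ≤ m → ((X + 1 : F[X])) ^ m = X ^ m + 1 → ∃ n, m = 2 ^ n := by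
  intro m
  induction m using Nat.strong_induction_on with
  | _ m ih =>
    intro hm heq
    rcases Nat.even_or_odd m with he | ho
    · obtain ⟨q, hq⟩ := he
      have hq1 : 1 ≤ q := by omega
      have hsq : ((X + 1 : F[X]) ^ q) ^ 2 = (X ^ q + 1) ^ 2 := by
        rw [← pow_mul, CharTwo.add_sq, one_pow, ← pow_mul]
        rw [show q * 2 = m by omega]
        exact heq
      obtain ⟨n, hn⟩ := ih q (by omega) hq1 (sq_inj hsq)
      refine ⟨n + 1, ?_⟩
      have : 2 ^ (n + 1) = 2 * 2 ^ n := by rw [pow_succ]; ring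
      omega
    · rcases Nat.eq_or_lt_of_le hm with h1 | h1
      · exact ⟨0, by omega⟩
      exfalso
      have hd := congrArg derivative heq
      simp only [derivative_pow, derivative_add, derivative_X, derivative_one, add_zero,
        mul_one, derivative_X_pow] at hd
      have hmF : ((m : F)) = 1 := by
        obtain ⟨t, ht⟩ := ho
        rw [ht]
        push_cast
        rw [CharTwo.two_eq_zero]
        ring
      rw [hmF, map_one, one_mul, one_mul] at hd
      have he0 := congrArg (eval 0) hd
      simp only [eval_pow, eval_add, eval_X, eval_one, zero_add, one_pow] at he0
      rw [zero_pow (by omega : m - 1 ≠ 0)] at he0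
      exact one_ne_zero he0

end CharTwoStuff

section KeyAnalysis

variable [CharP F 2]

lemma Iset_odd {r : ℕ} (ho : r % 2 = 1) : Iset r = Finset.range (r + 1) := by
  rw [Iset, Finset.filter_true_of_mem]
  intro i _
  omega

lemma Iset_even {r : ℕ} (he : r % 2 = 0) (hr : 1 ≤ r) :
    Iset r = (Finset.range (r + 1)).erase (r / 2) := by
  ext i
  simp only [Iset, Finset.mem_filter, Finset.mem_range, Finset.mem_erase]
  omega

lemma key_c_eq_one {c : F} (hc : c ≠ 0) {r : ℕ} (hr : 1 ≤ r)
    (heq : (∑ i ∈ Iset r, (X : F[X]) ^ i) = (X + C c) ^ r) : c = 1 := by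
  have hcard : 2 ∣ (Iset r).card := by
    rcases Nat.even_or_odd r with he | ho
    · have he' := Nat.even_iff.mp he
      rw [Iset_even (by omega) hr, Finset.card_erase_of_mem (by
        simp only [Finset.mem_range]; omega), Finset.card_range]
      omega
    · have ho' := Nat.odd_iff.mp ho
      rw [Iset_odd (by omega), Finset.card_range]
      omega
  have he := congrArg (eval 1) heq
  rw [eval_finset_sum] at he
  simp only [eval_pow, eval_add, eval_X, eval_C, one_pow] at he
  rw [Finset.sum_const, nsmul_eq_mul, mul_one] at he
  rw [(CharP.cast_eq_zero_iff F 2 _).mpr hcard] at he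
  have h10 : (1 : F) + c = 0 := pow_eq_zero_iff (by omega : r ≠ 0) |>.mp he.symm
  have : c = -1 := by linear_combination h10
  rw [this, CharTwo.neg_eq]

lemma key_analysis {c : F} (hc : c ≠ 0) {r : ℕ} (hr : 1 ≤ r)
    (heq : (∑ i ∈ Iset r, (X : F[X]) ^ i) = (X + C c) ^ r) :
    c = 1 ∧ (r = 2 ∨ ∃ n, 1 ≤ n ∧ r = 2 ^ n - 1) := by
  have hc1 : c = 1 := key_c_eq_one hc hr heq
  subst hc1
  rw [map_one] at heq
  refine ⟨rfl, ?_⟩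
  rcases Nat.even_or_odd r with he | ho
  · -- even case : r = 2
    left
    obtain ⟨q, hq⟩ := he
    have hq1 : 1 ≤ q := by omega
    have hqr : r / 2 = q := by omega
    rw [Iset_even (by omega) hr, hqr] at heq
    have hqmem : q ∈ Finset.range (r + 1) := by simp only [Finset.mem_range]; omega
    rw [Finset.sum_erase_eq_sub hqmem] at heq
    have E2 := congrArg (· * ((X : F[X]) - 1)) heq
    rw [sub_mul, geom_sum_mul] at E2
    have E3 := congrArg (fun f => eval 0 (derivative f)) E2
    simp only [derivative_sub, derivative_mul, derivative_pow, derivative_X_pow,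
      derivative_X, derivative_one, derivative_C, eval_sub, eval_mul, eval_add, eval_pow,
      eval_X, eval_C, eval_one, eval_natCast, sub_zero, mul_one, zero_add] at E3
    -- analyze
    rw [zero_pow (by omega : r + 1 - 1 ≠ 0), zero_pow (by omega : q ≠ 0)] at E3
    have hrc : ((r : F)) = 0 := (CharP.cast_eq_zero_iff F 2 _).mpr (by omega)
    have hr1c : ((r + 1 : ℕ) : F) = 1 := by
      push_cast
      rw [hrc]; ring
    by_contra hne2
    have hq2 : 2 ≤ q := by omega
    rw [zero_pow (by omega : q - 1 ≠ 0)] at E3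
    rw [hrc] at E3
    push_cast at E3
    rw [hrc] at E3
    simp at E3
  · -- odd case
    right
    have ho' := Nat.odd_iff.mp ho
    rw [Iset_odd (by omega)] at heq
    have E2 := congrArg (· * ((X : F[X]) - 1)) heq
    rw [geom_sum_mul, CharTwo.sub_eq_add, CharTwo.sub_eq_add] at E2
    rw [show (X + 1 : F[X]) ^ r * (X + 1) = (X + 1) ^ (r + 1) from (pow_succ _ _).symm] at E2
    obtain ⟨n, hn⟩ := pow_two_of (r + 1) (by omega) E2.symm
    have hn1 : 1 ≤ n := by
      rcases Nat.eq_zero_or_pos n with h0 | h0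
      · subst h0; simp at hn; omega
      · exact h0
    exact ⟨n, hn1, by omega⟩

end KeyAnalysis

section F4facts

lemma F4_card : Nat.card F4 = 4 := by
  simpa using GaloisField.card 2 2 (by norm_num)

lemma F4_pow_card (a : F4) : a ^ 4 = a := by
  haveI : Fintype F4 := Fintype.ofFinite _
  have h := FiniteField.pow_card a
  rwa [show Fintype.card F4 = 4 from by rw [← Nat.card_eq_fintype_card]; exact F4_card] at h

lemma F4_exists_alpha : ∃ α : F4, α ^ 2 + α + 1 = 0 ∧ α ≠ 0 ∧ α ≠ 1 := by
  haveI : Fintype F4 := Fintype.ofFinite _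
  classical
  have hcard : Fintype.card F4 = 4 := by rw [← Nat.card_eq_fintype_card]; exact F4_card
  obtain ⟨α, hα0, hα1⟩ : ∃ α : F4, α ≠ 0 ∧ α ≠ 1 := by
    by_contra hcon
    push_neg at hcon
    have hsub : (Finset.univ : Finset F4) ⊆ {0, 1} := by
      intro x _
      rcases eq_or_ne x 0 with h | h
      · simp [h]
      · simp [hcon x h]
    have hle := Finset.card_le_card hsub
    rw [Finset.card_univ, hcard] at hle
    have h2 : ({0, 1} : Finset F4).card ≤ 2 :=
      le_trans (Finset.card_insert_le _ _) (by simp)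
    omega
  have h4 := F4_pow_card α
  have hfac : α * (α - 1) * (α ^ 2 + α + 1) = 0 := by linear_combination h4
  rcases mul_eq_zero.mp hfac with h | h
  · rcases mul_eq_zero.mp h with h' | h'
    · exact absurd h' hα0
    · exact absurd (by linear_combination h' : α = 1) hα1
  · exact ⟨α, h, hα0, hα1⟩

lemma F4_sq_add (a : F4) : a ^ 2 + a = 0 ∨ a ^ 2 + a = 1 := by
  have h4 := F4_pow_card a
  have h2 : (2 : F4) = 0 := CharTwo.two_eq_zero
  have ht : (a ^ 2 + a) * (a ^ 2 + a - 1) = 0 := by linear_combination h4 + (a ^ 3) * h2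
  rcases mul_eq_zero.mp ht with h | h
  · exact Or.inl h
  · exact Or.inr (by linear_combination h)

end F4facts

section Converse

lemma two_poly_zero : (2 : F4[X]) = 0 := CharTwo.two_eq_zero

lemma conv_sum {P : F4[X]} (hP0 : P ≠ 0) (hP1 : P + 1 ≠ 0) {r : ℕ} (hrT : r ∈ TSet) :
    (∑ i ∈ Iset r, P ^ i) * (∑ j ∈ Iset r, (P + 1) ^ j) = (P * (P + 1)) ^ r := by
  have h2 := two_poly_zero
  obtain ⟨hr0, hcase⟩ := hrT
  rcases hcase with rfl | ⟨n, hn1, rfl⟩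
  · -- r = 2
    have hI : Iset 2 = {0, 2} := by decide
    rw [hI]
    rw [Finset.sum_insert (by decide), Finset.sum_singleton,
      Finset.sum_insert (by decide), Finset.sum_singleton]
    linear_combination (P ^ 2 + P + 1) * h2
  · -- r = 2^n - 1
    set r := 2 ^ n - 1 with hr
    have hrodd : r % 2 = 1 := by
      have : 2 ^ n = 2 * 2 ^ (n - 1) := by
        rw [← pow_succ']
        congr 1
        omega
      omega
    have hr1 : r + 1 = 2 ^ n := by
      have : 2 ^ n = 2 * 2 ^ (n - 1) := by
        rw [← pow_succ']; congr 1; omega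
      omega
    rw [Iset_odd hrodd]
    have hfrob : (P + 1) ^ 2 ^ n = P ^ 2 ^ n + 1 := by
      rw [add_pow_char_pow, one_pow]
    have g1 := geom_sum_mul P (r + 1)
    rw [CharTwo.sub_eq_add, CharTwo.sub_eq_add, hr1, ← hfrob] at g1
    rw [← hr1, pow_succ] at g1
    have e1 : (∑ i ∈ Finset.range (r + 1), P ^ i) = (P + 1) ^ r :=
      mul_right_cancel₀ hP1 g1
    have g2 := geom_sum_mul (P + 1) (r + 1)
    rw [add_sub_cancel_right, hr1, hfrob, add_sub_cancel_right, ← hr1, pow_succ] at g2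
    have e2 : (∑ j ∈ Finset.range (r + 1), (P + 1) ^ j) = P ^ r :=
      mul_right_cancel₀ hP0 g2
    rw [e1, e2, ← mul_pow, mul_comm]

end Converse

lemma converse_main (B : F4[X]) (hB : B ∈ SigmaSet) : IsBUP B := by
  have h2 := two_poly_zero
  obtain ⟨r, hrT, hcase⟩ := hB
  have hr0 : 0 < r := hrT.1
  rcases hcase with rfl | rfl
  · have hPm : (X : F4[X]).Monic := monic_X
    have hPirr : Irreducible (X : F4[X]) := irreducible_X
    have hQeq : (X + 1 : F4[X]) = X - C 1 := by rw [map_one, CharTwo.sub_eq_add]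
    have hQm : (X + 1 : F4[X]).Monic := by rw [hQeq]; exact monic_X_sub_C 1
    have hQirr : Irreducible (X + 1 : F4[X]) := by rw [hQeq]; exact irreducible_X_sub_C 1
    have hne : (X : F4[X]) ≠ X + 1 := by
      intro h
      have := congrArg (eval 0) h
      simp at this
    have hBform : ((X : F4[X]) ^ 2 + X) ^ r = C 1 * ((X : F4[X]) ^ r * (X + 1) ^ r) := by
      rw [map_one, one_mul, ← mul_pow]
      congr 1
      ring
    rw [IsBUP, hBform, sigma_eq hPm hQm hPirr hQirr hne one_ne_zero hr0 hr0]
    rw [conv_sum X_ne_zero hQm.ne_zero hrT, map_one, one_mul, ← mul_pow]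
  · obtain ⟨α, hα, hα0, hα1⟩ := F4_exists_alpha
    have hPeq : (X + C α : F4[X]) = X - C α := (CharTwo.sub_eq_add X (C α)).symm
    have hPm : (X + C α : F4[X]).Monic := by rw [hPeq]; exact monic_X_sub_C α
    have hPirr : Irreducible (X + C α : F4[X]) := by rw [hPeq]; exact irreducible_X_sub_C α
    have hQeq : (X + C α + 1 : F4[X]) = X - C (α + 1) := by
      rw [CharTwo.sub_eq_add, map_add, map_one, add_assoc]
    have hQm : (X + C α + 1 : F4[X]).Monic := by rw [hQeq]; exact monic_X_sub_C _
    have hQirr : Irreducible (X + C α + 1 : F4[X]) := by rw [hQeq]; exact irreducible_X_sub_C _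
    have hne : (X + C α : F4[X]) ≠ X + C α + 1 := by
      intro h
      have := congrArg (eval 0) h
      simp at this
    have hCC : (C α : F4[X]) ^ 2 + C α = 1 := by
      rw [← map_pow, ← map_add,
        show α ^ 2 + α = 1 from by linear_combination hα - (CharTwo.two_eq_zero : (2:F4) = 0),
        map_one]
    have hprod : (X + C α : F4[X]) * (X + C α + 1) = X ^ 2 + X + 1 := by
      linear_combination (C α * X) * h2 + hCC
    have hBform : ((X : F4[X]) ^ 2 + X + 1) ^ r =
        C 1 * ((X + C α : F4[X]) ^ r * (X + C α + 1) ^ r) := by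
      rw [map_one, one_mul, ← mul_pow, hprod]
    rw [IsBUP, hBform, sigma_eq hPm hQm hPirr hQirr hne one_ne_zero hr0 hr0]
    rw [conv_sum hPm.ne_zero hQm.ne_zero hrT, map_one, one_mul, ← mul_pow, hprod]

lemma forward_main (A : F4[X]) (hBUP : IsBUP A) (hsplit : (A.map (RingHom.id F4)).Splits)
    (hom : omegaCount A = 2) : A ∈ SigmaSet := by
  classical
  rw [map_id] at hsplit
  have h2 := two_poly_zero
  have h2F : (2 : F4) = 0 := CharTwo.two_eq_zero
  obtain ⟨α, hαeq, hα0, hα1⟩ := F4_exists_alpha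
  have hinj : ∀ c d : F4, (X - C c : F4[X]) = X - C d → c = d := by
    intro c d h
    have h' := congrArg (eval 0) h
    simp only [eval_sub, eval_X, eval_C, zero_sub] at h'
    exact neg_inj.mp h'
  have hom' : {R : F4[X] | R.Monic ∧ Irreducible R ∧ R ∣ A}.ncard = 2 := hom
  obtain ⟨P, Q, hPQne, hset⟩ := Set.ncard_eq_two.mp hom'
  have hmemP : P.Monic ∧ Irreducible P ∧ P ∣ A := by
    have : P ∈ {R : F4[X] | R.Monic ∧ Irreducible R ∧ R ∣ A} := by
      rw [hset]; left; rfl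
    exact this
  have hmemQ : Q.Monic ∧ Irreducible Q ∧ Q ∣ A := by
    have : Q ∈ {R : F4[X] | R.Monic ∧ Irreducible R ∧ R ∣ A} := by
      rw [hset]; right; rfl
    exact this
  have hA0 : A ≠ 0 := by
    intro h0
    subst h0
    have hmk : ∀ c : F4, (X - C c) ∈ {R : F4[X] | R.Monic ∧ Irreducible R ∧ R ∣ (0:F4[X])} :=
      fun c => ⟨monic_X_sub_C c, irreducible_X_sub_C c, dvd_zero _⟩
    have e1 := hmk 0; have e2 := hmk 1; have e3 := hmk α
    rw [hset] at e1 e2 e3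
    rcases e1 with e1 | e1 <;> rcases e2 with e2 | e2 <;> rcases e3 with e3 | e3 <;>
      first
        | exact zero_ne_one (hinj 0 1 (e1.trans e2.symm))
        | exact hα0 (hinj α 0 (e3.trans e1.symm))
        | exact hα1 (hinj α 1 (e3.trans e2.symm))
  have hPdeg : P.degree = 1 :=
    (hsplit.of_dvd hA0 hmemP.2.2).degree_eq_one_of_irreducible hmemP.2.1
  have hQdeg : Q.degree = 1 :=
    (hsplit.of_dvd hA0 hmemQ.2.2).degree_eq_one_of_irreducible hmemQ.2.1
  have hPnd : P.natDegree = 1 := natDegree_eq_of_degree_eq_some hPdeg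
  have hQnd : Q.natDegree = 1 := natDegree_eq_of_degree_eq_some hQdeg
  have hPX : P = X + C (P.coeff 0) := hmemP.1.eq_X_add_C hPnd
  have hQX : Q = X + C (Q.coeff 0) := hmemQ.1.eq_X_add_C hQnd
  set a := P.coeff 0 with ha
  set b := Q.coeff 0 with hb0
  have hPX' : P = X - C a := by rw [hPX, CharTwo.sub_eq_add]
  have hQX' : Q = X - C b := by rw [hQX, CharTwo.sub_eq_add]
  have hab : a ≠ b := fun h => hPQne (by rw [hPX, hQX, h])
  have hroots_mem : ∀ z ∈ A.roots, z = a ∨ z = b := by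
    intro z hz
    have hdvd : X - C z ∣ A := dvd_iff_isRoot.mpr (isRoot_of_mem_roots hz)
    have hmem : (X - C z) ∈ {R : F4[X] | R.Monic ∧ Irreducible R ∧ R ∣ A} :=
      ⟨monic_X_sub_C z, irreducible_X_sub_C z, hdvd⟩
    rw [hset] at hmem
    rcases hmem with h | h
    · exact Or.inl (hinj z a (by rw [h, hPX']))
    · exact Or.inr (hinj z b (by rw [h, hQX']))
  obtain ⟨m, hmdef⟩ : ∃ m, A.roots.count a = m := ⟨_, rfl⟩
  obtain ⟨n, hndef⟩ : ∃ n, A.roots.count b = n := ⟨_, rfl⟩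
  have hm1 : 1 ≤ m := by
    rw [← hmdef]
    refine Multiset.count_pos.mpr ((mem_roots hA0).mpr ?_)
    exact dvd_iff_isRoot.mp (hPX' ▸ hmemP.2.2)
  have hn1 : 1 ≤ n := by
    rw [← hndef]
    refine Multiset.count_pos.mpr ((mem_roots hA0).mpr ?_)
    exact dvd_iff_isRoot.mp (hQX' ▸ hmemQ.2.2)
  have hRdecomp : A.roots = Multiset.replicate m a + Multiset.replicate n b := by
    ext z
    rw [Multiset.count_add, Multiset.count_replicate, Multiset.count_replicate]
    by_cases hza : z = a
    · subst hza
      rw [if_pos rfl, if_neg (Ne.symm hab), add_zero, hmdef]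
    · by_cases hzb : z = b
      · subst hzb
        rw [if_neg hab, if_pos rfl, zero_add, hndef]
      · have hz0 : Multiset.count z A.roots = 0 := Multiset.count_eq_zero.mpr (fun hmem => by
          rcases hroots_mem z hmem with h | h
          · exact hza h
          · exact hzb h)
        rw [hz0, if_neg (fun h : a = z => hza h.symm), if_neg (fun h : b = z => hzb h.symm)]
  have hAeq : A = C A.leadingCoeff * (P ^ m * Q ^ n) := by
    have hA := hsplit.eq_prod_roots
    rw [hRdecomp, Multiset.map_add, Multiset.map_replicate, Multiset.map_replicate,
      Multiset.prod_add, Multiset.prod_replicate, Multiset.prod_replicate,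
      ← hPX', ← hQX'] at hA
    exact hA
  have hlc : A.leadingCoeff ≠ 0 := leadingCoeff_ne_zero.mpr hA0
  have hσ := sigma_eq hmemP.1 hmemQ.1 hmemP.2.1 hmemQ.2.1 hPQne hlc hm1 hn1
  have hBUP' : (∑ i ∈ Iset m, P ^ i) * (∑ j ∈ Iset n, Q ^ j) =
      C A.leadingCoeff * (P ^ m * Q ^ n) := by
    rw [← hσ, ← hAeq]
    exact hBUP
  have hMon : ((∑ i ∈ Iset m, P ^ i) * (∑ j ∈ Iset n, Q ^ j)).Monic :=
    (sumpow_monic hmemP.1 hPdeg hm1).mul (sumpow_monic hmemQ.1 hQdeg hn1)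
  have hlc1 : A.leadingCoeff = 1 := by
    have hM2 := hMon
    rw [hBUP'] at hM2
    have hmon2 : (P ^ m * Q ^ n).Monic := (hmemP.1.pow m).mul (hmemQ.1.pow n)
    have hLC : (C A.leadingCoeff * (P ^ m * Q ^ n)).leadingCoeff = A.leadingCoeff := by
      rw [leadingCoeff_mul, leadingCoeff_C, hmon2.leadingCoeff, mul_one]
    rw [Monic, hLC] at hM2
    exact hM2
  rw [hlc1, map_one, one_mul] at hBUP'
  have hhalf1 := half hmemP.1 hmemQ.1 hmemP.2.1 hmemQ.2.1 hPQne hm1 hn1 hPdeg hQdeg hBUP'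
  have hBUP'' : (∑ j ∈ Iset n, Q ^ j) * (∑ i ∈ Iset m, P ^ i) = Q ^ n * P ^ m := by
    rw [mul_comm, hBUP', mul_comm]
  have hhalf2 := half hmemQ.1 hmemP.1 hmemQ.2.1 hmemP.2.1 (Ne.symm hPQne) hn1 hm1
    hQdeg hPdeg hBUP''
  have hmn : n = m := le_antisymm hhalf2.1 hhalf1.1
  subst hmn
  have hSP := hhalf1.2
  have hcomp := congrArg (fun f => f.comp (X + C a)) hSP
  simp only [hPX', hQX', Polynomial.sum_comp, pow_comp, sub_comp, X_comp, C_comp,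
    add_sub_cancel_right] at hcomp
  rw [add_sub_assoc, ← map_sub] at hcomp
  have hc : a - b ≠ 0 := sub_ne_zero.mpr hab
  obtain ⟨hc1, hrdisj⟩ := key_analysis hc hm1 hcomp
  have hba : b = a + 1 := by linear_combination -hc1 - h2F
  have hprod : P * Q = X ^ 2 + X + C (a ^ 2 + a) := by
    rw [hPX', hQX', hba, map_add, map_add, map_pow, map_one]
    linear_combination (-(C a + 1) * X) * h2
  have hAfin : A = (X ^ 2 + X + C (a ^ 2 + a)) ^ n := by
    rw [hAeq, hlc1, map_one, one_mul, ← mul_pow, hprod]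
  rcases F4_sq_add a with ht | ht
  · exact ⟨n, ⟨by omega, hrdisj⟩, Or.inl (by rw [hAfin, ht, map_zero, add_zero])⟩
  · exact ⟨n, ⟨by omega, hrdisj⟩, Or.inr (by rw [hAfin, ht, map_one])⟩


theorem stmt11 :
    (∀ A : Polynomial F4, IsBUP A → (A.map (RingHom.id F4)).Splits → omegaCount A = 2 →
      A ∈ SigmaSet) ∧
    (∀ B : Polynomial F4, B ∈ SigmaSet → IsBUP B) := by
  exact ⟨forward_main, converse_main⟩
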